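/- arXiv:1101.3872 — 4 statements merged into one kernel-verified Lean document; each statement's English description precedes it below -/
import Mathlib

section
/- Let X be a full subcategory of A-mod and n ≥ 2. The monomorphism category S_n(X) is closed under extensions in Mor_n(A) if and only if X is closed under extensions in A-mod. -/
open CategoryTheory Limits

/-- the hom between consecutive objects of `Fin n` (as a preorder category). -/
def consecHom (n k : ℕ) (h : k + 1 < n) :
    ((⟨k, by omega⟩ : Fin n) ⟶ (⟨k + 1, h⟩ : Fin n)) :=
  homOfLE (by simp [Fin.mk_le_mk])

/-- Membership in the monomorphism category `S_n(𝒳)` of a class `P` of `A`-modules, inside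
`Mor_n(A) = (Fin n ⥤ ModuleCat A)`: all branches lie in `P`, all structure maps are
monomorphisms, and all their cokernels lie in `P`. -/
noncomputable def SnP (A : Type) [Ring A] (n : ℕ) (P : ModuleCat A → Prop)
    (F : Fin n ⥤ ModuleCat A) : Prop :=
  (∀ k : Fin n, P (F.obj k)) ∧
  ∀ (k : ℕ) (h : k + 1 < n),
    Mono (F.map (consecHom n k h)) ∧ P (cokernel (F.map (consecHom n k h)))

section Snake

variable {A : Type} [Ring A]
variable {M₁ M₂ M₃ N₁ N₂ N₃ : ModuleCat A}
  (i : M₁ ⟶ M₂) (p : M₂ ⟶ M₃) (i' : N₁ ⟶ N₂) (p' : N₂ ⟶ N₃)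
  (a₁ : M₁ ⟶ N₁) (a₂ : M₂ ⟶ N₂) (a₃ : M₃ ⟶ N₃)

/-- If the outer vertical maps of a morphism of short exact sequences of modules are
injective, so is the middle one. -/
lemma snake_mono
    (comm1 : ∀ x, i' (a₁ x) = a₂ (i x)) (comm2 : ∀ x, p' (a₂ x) = a₃ (p x))
    (exM : ∀ x, p x = 0 → ∃ y, i y = x)
    (injN : Function.Injective i')
    (inj1 : Function.Injective a₁) (inj3 : Function.Injective a₃) :
    Function.Injective a₂ := by
  rw [injective_iff_map_eq_zero]
  intro x hx
  have h3 : a₃ (p x) = 0 := by rw [← comm2, hx]; simp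
  have hpx : p x = 0 := by apply inj3; simpa using h3
  obtain ⟨y, rfl⟩ := exM x hpx
  have h1 : i' (a₁ y) = 0 := by rw [comm1, hx]
  have hy : a₁ y = 0 := by apply injN; simpa using h1
  have : y = 0 := by apply inj1; simpa using hy
  rw [this]; simp

/-- The "cokernel part" of the snake lemma, packaged for a predicate `P` closed under
extensions: if the vertical maps are injective on the outside and the rows are short exact,
the cokernel of the middle vertical map is an extension of the outer cokernels. -/
lemma snake_coker (P : ModuleCat A → Prop)
    (hP : ∀ S : ShortComplex (ModuleCat A), S.ShortExact → P S.X₁ → P S.X₃ → P S.X₂)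
    (comm1 : ∀ x, i' (a₁ x) = a₂ (i x)) (comm2 : ∀ x, p' (a₂ x) = a₃ (p x))
    (surjM : Function.Surjective p)
    (exM : ∀ x, p x = 0 → ∃ y, i y = x)
    (injN : Function.Injective i') (surjN : Function.Surjective p')
    (exN : ∀ x, p' x = 0 → ∃ y, i' y = x)
    (zeroN : ∀ x, p' (i' x) = 0)
    (inj3 : Function.Injective a₃)
    (hP1 : P (ModuleCat.of A (N₁ ⧸ LinearMap.range a₁.hom)))
    (hP3 : P (ModuleCat.of A (N₃ ⧸ LinearMap.range a₃.hom))) :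
    P (ModuleCat.of A (N₂ ⧸ LinearMap.range a₂.hom)) := by
  have hle1 : LinearMap.range a₁.hom ≤ (LinearMap.range a₂.hom).comap i'.hom := by
    rintro _ ⟨y, rfl⟩
    exact ⟨i y, (comm1 y).symm⟩
  have hle2 : LinearMap.range a₂.hom ≤ (LinearMap.range a₃.hom).comap p'.hom := by
    rintro _ ⟨y, rfl⟩
    exact ⟨p y, (comm2 y).symm⟩
  set f1 : (N₁ ⧸ LinearMap.range a₁.hom) →ₗ[A] (N₂ ⧸ LinearMap.range a₂.hom) :=
    Submodule.mapQ _ _ _ hle1 with hf1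
  set f2 : (N₂ ⧸ LinearMap.range a₂.hom) →ₗ[A] (N₃ ⧸ LinearMap.range a₃.hom) :=
    Submodule.mapQ _ _ _ hle2 with hf2
  have hcomp : f2.comp f1 = 0 := by
    apply Submodule.linearMap_qext
    ext x
    simpa [hf1, hf2, Submodule.mapQ_apply, Submodule.Quotient.mk_eq_zero] using
      ⟨p (0 : M₂), by simpa using (zeroN x).symm⟩
  set S : ShortComplex (ModuleCat A) := ShortComplex.moduleCatMk f1 f2 hcomp with hSdef
  have hmono : Mono S.f := by
    rw [ModuleCat.mono_iff_injective]
    rw [injective_iff_map_eq_zero]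
    intro c hc
    obtain ⟨c, rfl⟩ := Submodule.Quotient.mk_surjective _ c
    have hc2 : (Submodule.Quotient.mk (i' c) : (N₂ ⧸ LinearMap.range a₂.hom)) = 0 := hc
    rw [Submodule.Quotient.mk_eq_zero] at hc2
    obtain ⟨x, hx⟩ := hc2
    have h3 : a₃ (p x) = 0 := by
      rw [← comm2, hx]
      exact zeroN c
    have hpx : p x = 0 := by apply inj3; simpa using h3
    obtain ⟨y, rfl⟩ := exM x hpx
    rw [← comm1] at hx
    have : a₁ y = c := injN hx
    show (Submodule.Quotient.mk c : (N₁ ⧸ LinearMap.range a₁.hom)) = 0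
    rw [Submodule.Quotient.mk_eq_zero]
    exact ⟨y, this⟩
  have hepi : Epi S.g := by
    rw [ModuleCat.epi_iff_surjective]
    intro z
    obtain ⟨z, rfl⟩ := Submodule.Quotient.mk_surjective _ z
    obtain ⟨x, rfl⟩ := surjN z
    exact ⟨Submodule.Quotient.mk x, rfl⟩
  have hexact : S.Exact := by
    rw [ShortComplex.moduleCat_exact_iff]
    intro x hx
    obtain ⟨x, rfl⟩ := Submodule.Quotient.mk_surjective _ x
    have hx2 : (Submodule.Quotient.mk (p' x) : (N₃ ⧸ LinearMap.range a₃.hom)) = 0 := hx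
    rw [Submodule.Quotient.mk_eq_zero] at hx2
    obtain ⟨z, hz⟩ := hx2
    obtain ⟨w, rfl⟩ := surjM z
    have : p' (x - a₂ w) = 0 := by
      rw [map_sub, comm2, hz, sub_self]
    obtain ⟨c, hc⟩ := exN _ this
    refine ⟨Submodule.Quotient.mk c, ?_⟩
    show (Submodule.Quotient.mk (i' c) : (N₂ ⧸ LinearMap.range a₂.hom)) = Submodule.Quotient.mk x
    rw [hc, Submodule.Quotient.eq]
    exact ⟨-w, by simp⟩
  exact hP S { exact := hexact, mono_f := hmono, epi_g := hepi } hP1 hP3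

end Snake

/-- Let `A` be an Artin algebra, `n ≥ 2`, and `𝒳` a full subcategory of `A`-mod
(given by a class `P` of modules, closed under isomorphism and containing the zero module).
Then `S_n(𝒳)` is closed under extensions in `Mor_n(A)` if and only if `𝒳` is closed under
extensions in `A`-mod. -/
theorem stmt2 (R : Type) [CommRing R] [IsArtinianRing R]
    (A : Type) [Ring A] [Algebra R A] [Module.Finite R A]
    (n : ℕ) (hn : 2 ≤ n)
    (P : ModuleCat A → Prop)
    (hiso : ∀ M N : ModuleCat A, (M ≅ N) → P M → P N)
    (hzero : P (ModuleCat.of A PUnit)) :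
    (∀ S : ShortComplex (Fin n ⥤ ModuleCat A), S.ShortExact →
        SnP A n P S.X₁ → SnP A n P S.X₃ → SnP A n P S.X₂) ↔
    (∀ S : ShortComplex (ModuleCat A), S.ShortExact → P S.X₁ → P S.X₃ → P S.X₂) := by
  constructor
  · -- `S_n(𝒳)` ext-closed → `𝒳` ext-closed
    intro h S hS hP1 hP3
    letI Fc : ModuleCat A ⥤ (Fin n ⥤ ModuleCat A) := Functor.const (Fin n)
    haveI : Fc.PreservesZeroMorphisms := ⟨by intro X Y; ext j; rfl⟩
    haveI : PreservesFiniteLimits Fc :=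
      ⟨fun J _ _ => preservesLimitsOfShape_of_evaluation _ J fun k =>
        preservesLimitsOfShape_of_natIso (Functor.constCompEvaluationObj _ k).symm⟩
    haveI : PreservesFiniteColimits Fc :=
      ⟨fun J _ _ => preservesColimitsOfShape_of_evaluation _ J fun k =>
        preservesColimitsOfShape_of_natIso (Functor.constCompEvaluationObj _ k).symm⟩
    have hSc := hS.map_of_exact Fc
    have hconst : ∀ M : ModuleCat A, P M → SnP A n P (Fc.obj M) := by
      intro M hM
      refine ⟨fun k => hM, fun k hk => ⟨(inferInstance : Mono (𝟙 M)), ?_⟩⟩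
      haveI : Epi ((Fc.obj M).map (consecHom n k hk)) := (inferInstance : Epi (𝟙 M))
      exact hiso _ _ ((ModuleCat.isZero_of_subsingleton _).iso
        (IsZero.of_iso (isZero_zero _) (cokernel.ofEpi _))) hzero
    exact (h _ hSc (hconst _ hP1) (hconst _ hP3)).1 ⟨0, by omega⟩
  · -- `𝒳` ext-closed → `S_n(𝒳)` ext-closed
    intro hP S hS h1 h3
    have hSk : ∀ k : Fin n, (S.map ((evaluation (Fin n) (ModuleCat A)).obj k)).ShortExact :=
      fun k => hS.map_of_exact _
    have hobj : ∀ k : Fin n, P (S.X₂.obj k) := fun k => hP _ (hSk k) (h1.1 k) (h3.1 k)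
    refine ⟨hobj, fun k hk => ?_⟩
    have hk0 : k < n := by omega
    set j₀ : Fin n := ⟨k, hk0⟩ with hj₀
    set j₁ : Fin n := ⟨k + 1, hk⟩ with hj₁
    set φ : j₀ ⟶ j₁ := consecHom n k hk with hφ
    have inj_f : ∀ j : Fin n, Function.Injective (S.f.app j) :=
      fun j => (hSk j).moduleCat_injective_f
    have surj_g : ∀ j : Fin n, Function.Surjective (S.g.app j) :=
      fun j => (hSk j).moduleCat_surjective_g
    have exa : ∀ (j : Fin n) (x : S.X₂.obj j), S.g.app j x = 0 → ∃ y, S.f.app j y = x :=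
      fun j => ((S.map ((evaluation (Fin n) (ModuleCat A)).obj j)).moduleCat_exact_iff).1
        (hSk j).exact
    have zero_g : ∀ (j : Fin n) (x : S.X₁.obj j), S.g.app j (S.f.app j x) = 0 :=
      fun j x => (S.map ((evaluation (Fin n) (ModuleCat A)).obj j)).moduleCat_zero_apply x
    have comm1 : ∀ x, S.f.app j₁ (S.X₁.map φ x) = S.X₂.map φ (S.f.app j₀ x) :=
      fun x => congrArg (fun (h : S.X₁.obj j₀ ⟶ S.X₂.obj j₁) => h x) (S.f.naturality φ)
    have comm2 : ∀ x, S.g.app j₁ (S.X₂.map φ x) = S.X₃.map φ (S.g.app j₀ x) :=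
      fun x => congrArg (fun (h : S.X₂.obj j₀ ⟶ S.X₃.obj j₁) => h x) (S.g.naturality φ)
    have inj1 : Function.Injective (S.X₁.map φ) :=
      (ModuleCat.mono_iff_injective _).1 (h1.2 k hk).1
    have inj3 : Function.Injective (S.X₃.map φ) :=
      (ModuleCat.mono_iff_injective _).1 (h3.2 k hk).1
    constructor
    · rw [ModuleCat.mono_iff_injective]
      exact snake_mono (S.f.app j₀) (S.g.app j₀) (S.f.app j₁) (S.g.app j₁)
        (S.X₁.map φ) (S.X₂.map φ) (S.X₃.map φ) comm1 comm2 (exa j₀) (inj_f j₁) inj1 inj3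
    · have hP1 : P (ModuleCat.of A ((S.X₁.obj j₁ : Type) ⧸ LinearMap.range (S.X₁.map φ).hom)) :=
        hiso _ _ (ModuleCat.cokernelIsoRangeQuotient (S.X₁.map φ)) (h1.2 k hk).2
      have hP3 : P (ModuleCat.of A ((S.X₃.obj j₁ : Type) ⧸ LinearMap.range (S.X₃.map φ).hom)) :=
        hiso _ _ (ModuleCat.cokernelIsoRangeQuotient (S.X₃.map φ)) (h3.2 k hk).2
      have := snake_coker (S.f.app j₀) (S.g.app j₀) (S.f.app j₁) (S.g.app j₁)
        (S.X₁.map φ) (S.X₂.map φ) (S.X₃.map φ) P hP comm1 comm2 (surj_g j₀) (exa j₀)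
        (inj_f j₁) (surj_g j₁) (exa j₁) (zero_g j₁) inj3 hP1 hP3
      exact hiso _ _ (ModuleCat.cokernelIsoRangeQuotient (S.X₂.map φ)).symm this
end

section
/- For each 1 ≤ i ≤ n-1, each A-module M, and each object X = (X_j, φ_j) of Mor_n(A), there is an isomorphism of abelian groups Hom_{Mor_n(A)}(X, m_i(M)) ≅ Hom_A(Coker(φ_1⋯φ_i), M), natural in both positions. -/
/-- The composite `φ_1 ⋯ φ_i : X_{i+1} → X_1` of the structure maps of an object of the
morphism category; `compMap φ 0 = id`. -/
def compMap {A : Type} [Ring A] {X : ℕ → Type} [∀ j, AddCommGroup (X j)]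
    [∀ j, Module A (X j)] (φ : ∀ j, X (j + 1) →ₗ[A] X j) : ∀ i, X (i + 1) →ₗ[A] X 1
  | 0 => LinearMap.id
  | i + 1 => (compMap φ i).comp (φ (i + 1))

private lemma key_lemma {A : Type} [Ring A] {X : ℕ → Type} [∀ j, AddCommGroup (X j)]
    [∀ j, Module A (X j)] (φ : ∀ j, X (j + 1) →ₗ[A] X j)
    {M : Type} [AddCommGroup M] [Module A M] {i : ℕ}
    (f : ∀ j, X j →ₗ[A] M)
    (hf : ∀ j, 1 ≤ j → j + 1 ≤ i → (f j).comp (φ j) = f (j + 1)) :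
    ∀ k, k + 1 ≤ i → f (k + 1) = (f 1).comp (compMap φ k) := by
  intro k
  induction k with
  | zero => intro _; simp [compMap]
  | succ m ih =>
    intro h
    rw [← hf (m + 1) (by omega) h, ih (by omega)]
    simp [compMap, LinearMap.comp_assoc]

/-- Let `A` be an Artin algebra, `n ≥ 2`, `1 ≤ i ≤ n-1`, `M` an `A`-module and
`X = (X_j, φ_j)` an object of `Mor_n(A)`.  A morphism `X → m_i(M)` of `Mor_n(A)` is precisely
a family `f_j : X_j → M` (`1 ≤ j ≤ i`, the components for `j > i` being `0`) with
`f_j ∘ φ_j = f_{j+1}` (for `j < i`) and `f_i ∘ φ_i = 0`; the assignment `f ↦ f_1` is an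
(automatically additive and natural) injection whose image consists exactly of the
`A`-maps `X_1 → M` vanishing on the image of `φ_1⋯φ_i`, i.e.
`Hom_{Mor_n(A)}(X, m_i(M)) ≅ Hom_A(Coker (φ_1⋯φ_i), M)`. -/
theorem stmt6 (R : Type) [CommRing R] [IsArtinianRing R]
    (A : Type) [Ring A] [Algebra R A] [Module.Finite R A]
    (n : ℕ) (hn : 2 ≤ n)
    (X : ℕ → Type) [∀ j, AddCommGroup (X j)] [∀ j, Module A (X j)]
    (φ : ∀ j, X (j + 1) →ₗ[A] X j)
    (M : Type) [AddCommGroup M] [Module A M]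
    (i : ℕ) (hi1 : 1 ≤ i) (hi2 : i ≤ n - 1) :
    Function.Injective
      (fun f : {f : ∀ j, X j →ₗ[A] M //
          (∀ j, 1 ≤ j → j + 1 ≤ i → (f j).comp (φ j) = f (j + 1)) ∧
          ((f i).comp (φ i) = 0) ∧
          (∀ j, j < 1 ∨ i < j → f j = 0)} => f.1 1) ∧
    Set.range
      (fun f : {f : ∀ j, X j →ₗ[A] M //
          (∀ j, 1 ≤ j → j + 1 ≤ i → (f j).comp (φ j) = f (j + 1)) ∧
          ((f i).comp (φ i) = 0) ∧
          (∀ j, j < 1 ∨ i < j → f j = 0)} => f.1 1) =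
      {u : X 1 →ₗ[A] M | u.comp (compMap φ i) = 0} := by
  obtain ⟨m, rfl⟩ : ∃ m, i = m + 1 := ⟨i - 1, by omega⟩
  constructor
  · rintro ⟨f, hf1, hf2, hf3⟩ ⟨g, hg1, hg2, hg3⟩ h
    simp only at h
    apply Subtype.ext
    funext j
    match j with
    | 0 => show f 0 = g 0; rw [hf3 0 (Or.inl one_pos), hg3 0 (Or.inl one_pos)]
    | k + 1 =>
      show f (k + 1) = g (k + 1)
      by_cases hk : k + 1 ≤ m + 1
      · rw [key_lemma φ f hf1 k hk, key_lemma φ g hg1 k hk, h]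
      · rw [hf3 (k + 1) (Or.inr (by omega)), hg3 (k + 1) (Or.inr (by omega))]
  · ext u
    constructor
    · rintro ⟨⟨f, hf1, hf2, hf3⟩, rfl⟩
      show (f 1).comp (compMap φ (m + 1)) = 0
      have := key_lemma φ f hf1 m le_rfl
      simp only [compMap, ← LinearMap.comp_assoc, ← this, hf2]
    · intro hu
      refine ⟨⟨fun j => match j with
        | 0 => 0
        | k + 1 => if k + 1 ≤ m + 1 then u.comp (compMap φ k) else 0, ?_, ?_, ?_⟩, ?_⟩
      · intro j hj1 hj2
        match j with
        | k + 1 =>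
          simp only [if_pos (show k + 1 ≤ m + 1 by omega), if_pos hj2]
          simp [compMap, LinearMap.comp_assoc]
      · simp only [if_pos le_rfl]
        rw [LinearMap.comp_assoc]
        exact hu
      · intro j hj
        match j with
        | 0 => rfl
        | k + 1 =>
          rcases hj with hj | hj
          · omega
          · simp only [if_neg (show ¬ k + 1 ≤ m + 1 by omega)]
      · simp [compMap, show 1 ≤ m + 1 by omega]
end

section
/- For every object X = (X_i, φ_i) of Mor_n(A), the canonical epimorphism rMon(X) → X (given in each branch by projection onto the first summand) is a right minimal approximation of X in the monomorphism category S_n(A). In particular S_n(A) is contravariantly finite in Mor_n(A). -/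
open CategoryTheory Limits

attribute [local instance] CategoryTheory.Abelian.hasFiniteBiproducts

/-- Membership in `S_n(A)`: all structure maps are monomorphisms. -/
def SnA (A : Type) [Ring A] (n : ℕ) (F : Fin n ⥤ ModuleCat A) : Prop :=
  ∀ (k : ℕ) (h : k + 1 < n), Mono (F.map (consecHom n k h))

universe v

section Ess
variable {R : Type} [Ring R] {E : Type v} [AddCommGroup E] [Module R E]

/-- `K` is an essential submodule of `N` (inside the ambient module `E`). -/
def Ess (K N : Submodule R E) : Prop :=
  K ≤ N ∧ ∀ x ∈ N, x ≠ 0 → ∃ r : R, r • x ∈ K ∧ r • x ≠ 0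

lemma Ess.refl (K : Submodule R E) : Ess K K :=
  ⟨le_rfl, fun x hx h0 => ⟨1, by simpa, by simpa⟩⟩

lemma Ess.trans {K N P : Submodule R E} (h1 : Ess K N) (h2 : Ess N P) : Ess K P := by
  refine ⟨h1.1.trans h2.1, fun x hx h0 => ?_⟩
  obtain ⟨r, hrN, hr0⟩ := h2.2 x hx h0
  obtain ⟨s, hsK, hs0⟩ := h1.2 _ hrN hr0
  exact ⟨s * r, by rwa [mul_smul], by rwa [mul_smul]⟩

lemma Ess.inf_eq_bot {K N S : Submodule R E} (h : Ess K N) (hS : S ≤ N)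
    (hSK : S ⊓ K = ⊥) : S = ⊥ := by
  by_contra hne
  obtain ⟨x, hxS, hx0⟩ := (Submodule.ne_bot_iff S).1 hne
  obtain ⟨r, hrK, hr0⟩ := h.2 x (hS hxS) hx0
  exact hr0 (by simpa [hSK] using (Submodule.mem_inf).2 ⟨S.smul_mem r hxS, hrK⟩ : _)

lemma Ess.map {E' : Type v} [AddCommGroup E'] [Module R E'] (f : E →ₗ[R] E')
    (hf : Function.Injective f) {K N : Submodule R E} (h : Ess K N) :
    Ess (K.map f) (N.map f) := by
  refine ⟨Submodule.map_mono h.1, ?_⟩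
  rintro _ ⟨x, hx, rfl⟩ h0
  have hx0 : x ≠ 0 := by rintro rfl; simp at h0
  obtain ⟨r, hrK, hr0⟩ := h.2 x hx hx0
  refine ⟨r, ?_, ?_⟩
  · rw [← map_smul]; exact Submodule.mem_map_of_mem hrK
  · rw [← map_smul]
    intro hc
    exact hr0 (hf (by simpa using hc))

/-- A maximal essential extension of `K` exists. -/
lemma exists_max_ess (K : Submodule R E) : ∃ N, Maximal (Ess K) N := by
  have hz : ∀ c ⊆ setOf (Ess K), IsChain (fun x1 x2 => x1 ≤ x2) c → ∀ y ∈ c,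
      ∃ ub ∈ setOf (Ess K), ∀ z ∈ c, z ≤ ub := by
    intro c hc hchain N₀ hN₀
    refine ⟨sSup c, ⟨le_trans (hc hN₀).1 (le_sSup hN₀), ?_⟩, fun z hz => le_sSup hz⟩
    intro x hx h0
    rw [Submodule.mem_sSup_of_directed ⟨N₀, hN₀⟩ hchain.directedOn] at hx
    obtain ⟨N, hNc, hxN⟩ := hx
    exact (hc hNc).2 x hxN h0
  obtain ⟨m, _, hm⟩ := zorn_le_nonempty₀ (setOf (Ess K)) hz K (Ess.refl K)
  exact ⟨m, hm⟩

/-- A maximal submodule intersecting `N` trivially exists. -/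
lemma exists_max_compl (N : Submodule R E) : ∃ M, Maximal (fun T => T ⊓ N = ⊥) M := by
  have hz : ∀ c ⊆ setOf (fun T => T ⊓ N = ⊥), IsChain (fun x1 x2 => x1 ≤ x2) c → ∀ y ∈ c,
      ∃ ub ∈ setOf (fun T => T ⊓ N = ⊥), ∀ z ∈ c, z ≤ ub := by
    intro c hc hchain T₀ hT₀
    refine ⟨sSup c, ?_, fun z hz => le_sSup hz⟩
    show sSup c ⊓ N = ⊥
    rw [eq_bot_iff]
    rintro x hx
    obtain ⟨hx1, hx2⟩ := Submodule.mem_inf.1 hx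
    rw [Submodule.mem_sSup_of_directed ⟨T₀, hT₀⟩ hchain.directedOn] at hx1
    obtain ⟨T, hTc, hxT⟩ := hx1
    have := hc hTc
    rw [← this]
    exact Submodule.mem_inf.2 ⟨hxT, hx2⟩
  obtain ⟨m, _, hm⟩ := zorn_le_nonempty₀ (setOf (fun T => T ⊓ N = ⊥)) hz ⊥ (bot_inf_eq N)
  exact ⟨m, hm⟩

end Ess

section Hull

variable {R : Type} [Ring R]

/-- Existence of injective hulls in `ModuleCat R`. -/
theorem exists_injective_hull (K : ModuleCat.{v} R) :
    ∃ (I : ModuleCat.{v} R) (e : K ⟶ I), Injective I ∧ Mono e ∧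
      ∀ x : I, x ≠ 0 → ∃ r : R, r • x ∈ LinearMap.range e.hom ∧ r • x ≠ 0 := by
  classical
  set E : ModuleCat.{v} R := Injective.under K with hE
  haveI : Injective (ModuleCat.of R (↑E : Type v)) := inferInstanceAs (Injective E)
  have hEinj : Module.Injective R (↑E : Type v) :=
    Module.injective_module_of_injective_object R (↑E : Type v)
  set ι : K ⟶ E := Injective.ι K with hι
  have hιinj : Function.Injective ι := by
    rw [← ModuleCat.mono_iff_injective]; infer_instance
  set K' : Submodule R E := LinearMap.range ι.hom with hK'
  obtain ⟨N, hNmax⟩ : ∃ N, Maximal (Ess K') N := exists_max_ess K'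
  have hK'N : K' ≤ N := hNmax.1.1
  obtain ⟨M, hMmax⟩ := exists_max_compl (R := R) N
  have hMN : M ⊓ N = ⊥ := hMmax.1
  set q : (↑E : Type v) →ₗ[R] ((↑E : Type v) ⧸ M) := M.mkQ with hq
  have hqN : ∀ y ∈ N, q y = 0 → y = 0 := by
    intro y hy h0
    have hyM : y ∈ M := (Submodule.Quotient.mk_eq_zero M).1 h0
    have : y ∈ M ⊓ N := Submodule.mem_inf.2 ⟨hyM, hy⟩
    rw [hMN] at this; simpa using this
  have hEssQuot : ∀ z : (↑E : Type v) ⧸ M, z ≠ 0 →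
      ∃ r : R, r • z ∈ N.map q ∧ r • z ≠ 0 := by
    intro z hz
    obtain ⟨x, rfl⟩ := Submodule.mkQ_surjective M z
    set S := Submodule.comap q (Submodule.span R {q x}) with hS
    have hMS : M ≤ S := by
      intro m hm
      simp only [hS, Submodule.mem_comap]
      have : q m = 0 := (Submodule.Quotient.mk_eq_zero M).2 hm
      rw [this]; exact Submodule.zero_mem _
    have hxS : x ∈ S := Submodule.mem_comap.2 (Submodule.mem_span_singleton_self _)
    have hxM : x ∉ M := fun hm => hz ((Submodule.Quotient.mk_eq_zero M).2 hm)
    have hSN : ¬ (S ⊓ N = ⊥) := by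
      intro hbot
      exact hxM (hMmax.2 hbot hMS hxS)
    obtain ⟨y, hy, hy0⟩ := (Submodule.ne_bot_iff _).1 hSN
    obtain ⟨hyS, hyN⟩ := Submodule.mem_inf.1 hy
    obtain ⟨r, hr⟩ := Submodule.mem_span_singleton.1 (Submodule.mem_comap.1 hyS)
    have hqy : q y ≠ 0 := fun h0 => hy0 (hqN y hyN h0)
    refine ⟨r, ?_, ?_⟩
    · rw [hr]; exact Submodule.mem_map_of_mem hyN
    · rw [hr]; exact hqy
  -- construct σ by injectivity of E
  have hfinj : Function.Injective (q.comp N.subtype) := by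
    intro a b hab
    have : q ((a : (↑E : Type v)) - b) = 0 := by
      rw [map_sub]; simpa using sub_eq_zero_of_eq hab
    have := hqN _ (Submodule.sub_mem N a.2 b.2) this
    exact Subtype.ext (sub_eq_zero.1 this)
  obtain ⟨σ, hσ⟩ := hEinj.out (q.comp N.subtype) hfinj N.subtype
  have hσN : ∀ y (hy : y ∈ N), σ (q y) = y := fun y hy => hσ ⟨y, hy⟩
  have hσinj : Function.Injective σ := by
    have hker : ∀ z, σ z = 0 → z = 0 := by
      intro z h0
      by_contra hz
      obtain ⟨r, hrm, hr0⟩ := hEssQuot z hz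
      obtain ⟨y, hyN, hyq⟩ := hrm
      have : σ (r • z) = 0 := by rw [map_smul, h0, smul_zero]
      rw [← hyq, hσN y hyN] at this
      rw [this] at hyq
      simp only [map_zero] at hyq
      exact hr0 hyq.symm
    intro a b hab
    have : σ (a - b) = 0 := by rw [map_sub, sub_eq_zero]; exact hab
    have := hker _ this
    exact sub_eq_zero.1 this
  have hNrange : N ≤ LinearMap.range σ := fun y hy => ⟨q y, hσN y hy⟩
  have hmapmap : (N.map q).map σ = N := by
    apply le_antisymm
    · rintro _ ⟨_, ⟨y, hy, rfl⟩, rfl⟩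
      rw [hσN y hy]; exact hy
    · intro y hy
      exact ⟨q y, Submodule.mem_map_of_mem hy, hσN y hy⟩
  have hEssN : Ess N (LinearMap.range σ) := by
    have h1 : Ess (N.map q) (⊤ : Submodule R ((↑E : Type v) ⧸ M)) := ⟨le_top, fun z _ => hEssQuot z⟩
    have h2 := h1.map σ hσinj
    rwa [hmapmap, Submodule.map_top] at h2
  have hrangeN : LinearMap.range σ = N :=
    le_antisymm (hNmax.2 (hNmax.1.trans hEssN) hNrange) hNrange
  have hcompl : IsCompl N M := by
    constructor
    · rw [disjoint_iff, inf_comm]; exact hMN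
    · rw [codisjoint_iff, eq_top_iff]
      intro x _
      have hyN : σ (q x) ∈ N := hrangeN ▸ LinearMap.mem_range_self σ (q x)
      have hqy : q (σ (q x)) = q x := by
        apply hσinj
        rw [hσN _ hyN]
      have hxM : x - σ (q x) ∈ M := by
        rw [← Submodule.Quotient.mk_eq_zero M]
        show q _ = 0
        rw [map_sub, hqy, sub_self]
      exact Submodule.mem_sup.2 ⟨σ (q x), hyN, x - σ (q x), hxM, by abel⟩
  -- now assemble
  set Imod : ModuleCat.{v} R := ModuleCat.of R ↥N with hImod
  let i : Imod ⟶ E := ModuleCat.ofHom N.subtype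
  let rr : E ⟶ Imod := ModuleCat.ofHom (N.linearProjOfIsCompl M hcompl)
  have hir : i ≫ rr = 𝟙 Imod := by
    ext y
    exact congrArg Subtype.val (Submodule.linearProjOfIsCompl_apply_left hcompl y)
  have hIinj : Injective Imod := by
    constructor
    intro Xo Yo g f hm
    refine ⟨Injective.factorThru (g ≫ i) f ≫ rr, ?_⟩
    rw [← Category.assoc, Injective.comp_factorThru, Category.assoc, hir, Category.comp_id]
  have hmem : ∀ c : (↑K : Type v), ι c ∈ N := fun c => hK'N (LinearMap.mem_range_self _ c)
  let e : K ⟶ Imod := ModuleCat.ofHom (LinearMap.codRestrict N ι.hom hmem)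
  refine ⟨Imod, e, hIinj, ?_, ?_⟩
  · rw [ModuleCat.mono_iff_injective]
    intro a b hab
    apply hιinj
    exact congrArg Subtype.val hab
  · intro x hx
    let x' : ↥N := x
    have hx0 : (x' : (↑E : Type v)) ≠ 0 := fun h => hx (Subtype.ext h)
    obtain ⟨r, hrK, hr0⟩ := hNmax.1.2 (x' : (↑E : Type v)) x'.2 hx0
    obtain ⟨k, hk⟩ := hrK
    refine ⟨r, ⟨k, ?_⟩, fun h => hr0 ?_⟩
    · apply Subtype.ext
      exact hk
    · exact congrArg Subtype.val h

end Hull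

section IsoLemmas
variable {R : Type} [Ring R]

lemma isIso_of_comp_eq_self {K I : ModuleCat.{v} R} [Injective I] (e : K ⟶ I)
    (hEss : ∀ x : I, x ≠ 0 → ∃ r : R, r • x ∈ LinearMap.range e.hom ∧ r • x ≠ 0)
    (p : I ⟶ I) (hp : e ≫ p = e) : IsIso p := by
  have hfix : ∀ c : K, p (e c) = e c := fun c => congrArg (fun f : K ⟶ I => f.hom c) hp
  have hker : ∀ z : I, p z = 0 → z = 0 := by
    intro z h0
    by_contra hz
    obtain ⟨r, ⟨c, hc⟩, hr0⟩ := hEss z hz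
    apply hr0
    rw [← hc, ← hfix c, hc, map_smul, h0, smul_zero]
  have hpinj : Function.Injective p := by
    intro a b hab
    have : p (a - b) = 0 := by rw [map_sub, sub_eq_zero]; exact hab
    exact sub_eq_zero.1 (hker _ this)
  haveI : Mono p := (ModuleCat.mono_iff_injective p).2 hpinj
  obtain ⟨s, hs⟩ := Injective.factors (𝟙 I) p
  have hsker : ∀ z : I, s z = 0 → z = 0 := by
    intro z h0
    by_contra hz
    obtain ⟨r, ⟨c, hc⟩, hr0⟩ := hEss z hz
    apply hr0
    have h1 : s (p (e c)) = e c := congrArg (fun f : I ⟶ I => f.hom (e c)) hs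
    rw [hfix c] at h1
    rw [← hc, ← h1, hc, map_smul, h0, smul_zero]
  have hsinj : Function.Injective s := by
    intro a b hab
    have : s (a - b) = 0 := by rw [map_sub, sub_eq_zero]; exact hab
    exact sub_eq_zero.1 (hsker _ this)
  haveI : Mono s := (ModuleCat.mono_iff_injective s).2 hsinj
  haveI : IsSplitEpi s := ⟨⟨⟨p, hs⟩⟩⟩
  haveI : IsIso s := isIso_of_mono_of_epi s
  have : p = inv s := (cancel_mono s).1 (by rw [hs, IsIso.inv_hom_id])
  rw [this]; infer_instance

end IsoLemmas

section Triangular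
variable {C : Type*} [Category C] [Preadditive C]

lemma triangular_isIso {A B A' B' : C} [HasBinaryBiproduct A B] [HasBinaryBiproduct A' B']
    (u : A ⊞ B ⟶ A' ⊞ B')
    (h0 : biprod.inr ≫ u ≫ biprod.fst = 0)
    (ha : IsIso (biprod.inl ≫ u ≫ biprod.fst)) (hd : IsIso (biprod.inr ≫ u ≫ biprod.snd)) :
    IsIso u := by
  set a := biprod.inl ≫ u ≫ biprod.fst with h_a
  set b := biprod.inl ≫ u ≫ biprod.snd with h_b
  set d := biprod.inr ≫ u ≫ biprod.snd with h_d
  have hu : u = biprod.desc (biprod.lift a b) (biprod.lift 0 d) := by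
    apply biprod.hom_ext' <;> apply biprod.hom_ext <;>
      simp [h_a, h_b, h_d, h0]
  refine ⟨biprod.desc (biprod.lift (inv a) (-(inv a ≫ b ≫ inv d))) (biprod.lift 0 (inv d)),
    ?_, ?_⟩ <;> rw [hu] <;> apply biprod.hom_ext' <;> apply biprod.hom_ext <;>
    simp [Preadditive.comp_add, Preadditive.add_comp]

end Triangular

namespace Stmt12

variable {A : Type} [Ring A] {m : ℕ}

noncomputable def hullI (K : ModuleCat.{v} A) : ModuleCat.{v} A :=
  (exists_injective_hull K).choose

noncomputable def hullE (K : ModuleCat.{v} A) : K ⟶ hullI K :=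
  (exists_injective_hull K).choose_spec.choose

instance hullI_injective (K : ModuleCat.{v} A) : Injective (hullI K) :=
  (exists_injective_hull K).choose_spec.choose_spec.1

instance hullE_mono (K : ModuleCat.{v} A) : Mono (hullE K) :=
  (exists_injective_hull K).choose_spec.choose_spec.2.1

lemma hullE_ess (K : ModuleCat.{v} A) :
    ∀ x : hullI K, x ≠ 0 → ∃ r : A, r • x ∈ LinearMap.range (hullE K).hom ∧ r • x ≠ 0 :=
  (exists_injective_hull K).choose_spec.choose_spec.2.2

variable (X : Fin (m + 1) ⥤ ModuleCat.{v} A)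

lemma minFin (k : Fin (m + 1)) : (⟨min k.val m, by omega⟩ : Fin (m + 1)) = k :=
  Fin.ext (Nat.min_eq_left (Nat.lt_succ_iff.mp k.isLt))

noncomputable abbrev DD (i : ℕ) : ModuleCat.{v} A := X.obj ⟨min i m, by omega⟩

noncomputable def dd (i : ℕ) : DD X i ⟶ DD X (i + 1) :=
  X.map (homOfLE (by simp only [Fin.mk_le_mk]; omega))

lemma DD_eq (k : Fin (m + 1)) : DD X k.val = X.obj k := congrArg X.obj (minFin k)

noncomputable def II (i : ℕ) : ModuleCat.{v} A := hullI (kernel (dd X i))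

noncomputable def ee' (i : ℕ) : kernel (dd X i) ⟶ II X i := hullE _

instance (i : ℕ) : Injective (II X i) := hullI_injective _

instance (i : ℕ) : Mono (ee' X i) := hullE_mono _

noncomputable def ee (i : ℕ) : DD X i ⟶ II X i :=
  Injective.factorThru (ee' X i) (kernel.ι (dd X i))

lemma kerι_ee (i : ℕ) : kernel.ι (dd X i) ≫ ee X i = ee' X i :=
  Injective.comp_factorThru _ _

noncomputable abbrev JJ : ℕ → ModuleCat.{v} A
  | 0 => ModuleCat.of A PUnit
  | (i + 1) => II X i ⊞ JJ i

instance JJ_injective : ∀ i, Injective (JJ X i)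
  | 0 => by
    have h : Module.Injective A PUnit.{v+1} := by
      constructor
      intro Xm Ym _ _ _ _ f hf g
      exact ⟨0, fun x => Subsingleton.elim _ _⟩
    exact (Module.injective_iff_injective_object A PUnit.{v+1}).1 h
  | (i + 1) => by
    haveI := JJ_injective i
    exact inferInstanceAs (Injective (II X i ⊞ JJ X i))

noncomputable abbrev Cob (i : ℕ) : ModuleCat.{v} A := DD X i ⊞ JJ X i

noncomputable def theta (i : ℕ) : Cob X i ⟶ Cob X (i + 1) :=
  biprod.lift (biprod.fst ≫ dd X i)
    ((biprod.lift (biprod.fst ≫ ee X i) biprod.snd : Cob X i ⟶ II X i ⊞ JJ X i) ≫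
      eqToHom (rfl : (II X i ⊞ JJ X i : ModuleCat.{v} A) = JJ X (i + 1)))

lemma theta_mono (i : ℕ) : Mono (theta X i) := by
  rw [Preadditive.mono_iff_cancel_zero]
  intro T g hg
  simp only [theta, eqToHom_refl, Category.comp_id] at hg
  have h1 : g ≫ biprod.fst ≫ dd X i = 0 := by
    have := hg =≫ biprod.fst
    simpa [Category.assoc] using this
  have h2 : g ≫ biprod.fst ≫ ee X i = 0 := by
    have := hg =≫ (biprod.snd ≫ biprod.fst)
    simpa [Category.assoc] using this
  have h3 : g ≫ biprod.snd = 0 := by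
    have := hg =≫ (biprod.snd ≫ biprod.snd)
    simpa [Category.assoc] using this
  have h1' : (g ≫ biprod.fst) ≫ dd X i = 0 := by rw [Category.assoc]; exact h1
  set l := kernel.lift (dd X i) (g ≫ biprod.fst) h1' with hl
  have hfac : g ≫ biprod.fst = l ≫ kernel.ι (dd X i) := (kernel.lift_ι _ _ _).symm
  have h4 : l ≫ ee' X i = 0 := by
    rw [← kerι_ee, ← Category.assoc, ← hfac, Category.assoc]
    exact h2
  have h5 : l = 0 := by
    rw [← cancel_mono (ee' X i), h4, Limits.zero_comp]
  have h6 : g ≫ biprod.fst = 0 := by rw [hfac, h5, Limits.zero_comp]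
  apply biprod.hom_ext
  · rw [h6, Limits.zero_comp]
  · rw [h3, Limits.zero_comp]

lemma map_congr (F : Fin (m + 1) ⥤ ModuleCat.{v} A) {a b a' b' : Fin (m + 1)}
    (h1 : a' = a) (h2 : b' = b) (f : a ⟶ b) (f' : a' ⟶ b') :
    F.map f = eqToHom (congrArg F.obj h1).symm ≫ F.map f' ≫ eqToHom (congrArg F.obj h2) := by
  subst h1; subst h2
  rw [Subsingleton.elim f f']
  simp

lemma app_congr {F G : Fin (m + 1) ⥤ ModuleCat.{v} A} (g : F ⟶ G) {a b : Fin (m + 1)}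
    (h : a = b) :
    g.app b = eqToHom (congrArg F.obj h).symm ≫ g.app a ≫ eqToHom (congrArg G.obj h) := by
  subst h; simp

/-- the candidate approximation source, as a functor. -/
noncomputable def Cfun : Fin (m + 1) ⥤ ModuleCat.{v} A :=
  ComposableArrows.mkOfObjOfMapSucc (fun k => Cob X k.val) (fun k => theta X k.val)

lemma Cfun_obj (k : Fin (m + 1)) : (Cfun X).obj k = Cob X k.val := rfl

lemma Cfun_map_succ (i : ℕ) (hi : i < m) :
    (Cfun X).map (homOfLE (show (⟨i, by omega⟩ : Fin (m + 1)) ≤ ⟨i + 1, by omega⟩ by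
      simp only [Fin.mk_le_mk]; omega)) = theta X i := by
  have h := ComposableArrows.mkOfObjOfMapSucc_map_succ (fun k : Fin (m + 1) => Cob X k.val)
    (fun k : Fin m => theta X k.val) i hi
  rw [show (homOfLE _ : (⟨i, by omega⟩ : Fin (m + 1)) ⟶ ⟨i + 1, by omega⟩) =
    homOfLE (by simp only [Fin.mk_le_mk]; omega) from Subsingleton.elim _ _]
  exact h

noncomputable def alpha (k : Fin (m + 1)) : DD X k.val ⟶ X.obj k := eqToHom (DD_eq X k)

noncomputable def ff : Cfun X ⟶ X :=
  ComposableArrows.homMk (fun k => biprod.fst ≫ alpha X k) (by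
    intro i hi
    have hmap : ComposableArrows.map' (Cfun X) i (i + 1) (by omega) (by omega) = theta X i := by
      exact ComposableArrows.mkOfObjOfMapSucc_map_succ _ _ i hi
    rw [hmap]
    show theta X i ≫ biprod.fst ≫ alpha X ⟨i + 1, by omega⟩ =
      (biprod.fst ≫ alpha X ⟨i, by omega⟩) ≫ ComposableArrows.map' X i (i + 1) (by omega) (by omega)
    have hθ : theta X i ≫ biprod.fst = biprod.fst ≫ dd X i := by
      simp [theta]
    rw [← Category.assoc, hθ, Category.assoc, Category.assoc]
    congr 1
    have := map_congr X (a := (⟨i, by omega⟩ : Fin (m + 1))) (b := ⟨i + 1, by omega⟩)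
      (a' := ⟨min i m, by omega⟩) (b' := ⟨min (i + 1) m, by omega⟩)
      (minFin ⟨i, by omega⟩) (minFin ⟨i + 1, by omega⟩)
      (homOfLE (by simp only [Fin.mk_le_mk]; omega))
      (homOfLE (by simp only [Fin.mk_le_mk]; omega))
    show dd X i ≫ alpha X ⟨i + 1, by omega⟩ = alpha X ⟨i, by omega⟩ ≫
      X.map (homOfLE (by simp only [Fin.mk_le_mk]; omega))
    rw [this]
    simp only [alpha, eqToHom_trans_assoc, eqToHom_refl, Category.id_comp]
    unfold dd
    congr 1)

lemma ff_app (k : Fin (m + 1)) : (ff X).app k = biprod.fst ≫ alpha X k := rfl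

instance ff_epi : Epi (ff X) := by
  have : ∀ k : Fin (m + 1), Epi ((ff X).app k) := by
    intro k
    rw [ff_app]
    haveI : IsSplitEpi (biprod.fst : Cob X k.val ⟶ DD X k.val) :=
      ⟨⟨⟨biprod.inl, biprod.inl_fst⟩⟩⟩
    haveI : IsIso (alpha X k) := by unfold alpha; infer_instance
    exact epi_comp (biprod.fst : Cob X k.val ⟶ DD X k.val) (alpha X k)
  exact NatTrans.epi_of_epi_app _

lemma Cfun_SnA : SnA A (m + 1) (Cfun X) := by
  intro k hk
  have h : consecHom (m + 1) k hk = homOfLE (by simp only [Fin.mk_le_mk]; omega) :=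
    Subsingleton.elim _ _
  rw [h, Cfun_map_succ X k (by omega)]
  exact theta_mono X k

section Approx

variable (C' : Fin (m + 1) ⥤ ModuleCat.{v} A)

noncomputable abbrev DD' (i : ℕ) : ModuleCat.{v} A := C'.obj ⟨min i m, by omega⟩

noncomputable def dd' (i : ℕ) : DD' C' i ⟶ DD' C' (i + 1) :=
  C'.map (homOfLE (by simp only [Fin.mk_le_mk]; omega))

lemma dd'_mono (hC' : SnA A (m + 1) C') (i : ℕ) : Mono (dd' C' i) := by
  by_cases hi : i + 1 ≤ m
  · have hcon := map_congr C' (a := (⟨min i m, by omega⟩ : Fin (m + 1)))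
      (b := ⟨min (i + 1) m, by omega⟩) (a' := ⟨i, by omega⟩) (b' := ⟨i + 1, by omega⟩)
      (minFin ⟨i, by omega⟩).symm (minFin ⟨i + 1, by omega⟩).symm
      (homOfLE (by simp only [Fin.mk_le_mk]; omega)) (consecHom (m + 1) i (by omega))
    show Mono (C'.map (homOfLE (by simp only [Fin.mk_le_mk]; omega)))
    rw [hcon]
    haveI := hC' i (by omega)
    infer_instance
  · have hcon := map_congr C' (a := (⟨min i m, by omega⟩ : Fin (m + 1)))
      (b := ⟨min (i + 1) m, by omega⟩) (a' := ⟨m, by omega⟩) (b' := ⟨m, by omega⟩)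
      (by apply Fin.ext; simp; omega) (by apply Fin.ext; simp; omega)
      (homOfLE (by simp only [Fin.mk_le_mk]; omega)) (𝟙 _)
    show Mono (C'.map (homOfLE (by simp only [Fin.mk_le_mk]; omega)))
    rw [hcon, C'.map_id]
    infer_instance

variable (g : C' ⟶ X)

noncomputable def gg' (i : ℕ) : DD' C' i ⟶ DD X i := g.app ⟨min i m, by omega⟩

lemma gg'_nat (i : ℕ) : gg' X C' g i ≫ dd X i = dd' C' i ≫ gg' X C' g (i + 1) :=
  (g.naturality (homOfLE (by simp only [Fin.mk_le_mk]; omega))).symm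

noncomputable def tt (hC' : SnA A (m + 1) C') : ∀ i, DD' C' i ⟶ JJ X i
  | 0 => 0
  | (i + 1) =>
    haveI := dd'_mono C' hC' i
    (Injective.factorThru (biprod.lift (gg' X C' g i ≫ ee X i) (tt hC' i)) (dd' C' i) :
      DD' C' (i + 1) ⟶ II X i ⊞ JJ X i)

lemma tt_succ (hC' : SnA A (m + 1) C') (i : ℕ) :
    dd' C' i ≫ tt X C' g hC' (i + 1) =
      (biprod.lift (gg' X C' g i ≫ ee X i) (tt X C' g hC' i) : DD' C' i ⟶ II X i ⊞ JJ X i) := by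
  haveI := dd'_mono C' hC' i
  exact Injective.comp_factorThru _ _

noncomputable def happ (hC' : SnA A (m + 1) C') (i : ℕ) : DD' C' i ⟶ Cob X i :=
  biprod.lift (gg' X C' g i) (tt X C' g hC' i)

lemma happ_nat (hC' : SnA A (m + 1) C') (i : ℕ) :
    happ X C' g hC' i ≫ theta X i = dd' C' i ≫ happ X C' g hC' (i + 1) := by
  apply biprod.hom_ext
  · simp only [happ, theta, Category.assoc, biprod.lift_fst, eqToHom_refl, Category.comp_id,
      biprod.lift_fst_assoc]
    exact gg'_nat X C' g i
  · simp only [happ, theta, Category.assoc, biprod.lift_snd, eqToHom_refl, Category.comp_id]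
    rw [tt_succ X C' g hC' i]
    apply biprod.hom_ext
    · simp
    · simp

lemma approx (hC' : SnA A (m + 1) C') : ∃ h : C' ⟶ Cfun X, h ≫ ff X = g := by
  refine ⟨ComposableArrows.homMk
    (fun k => eqToHom ((congrArg C'.obj (minFin k)).symm) ≫ happ X C' g hC' k.val) ?_, ?_⟩
  · intro i hi
    have hmap : ComposableArrows.map' (Cfun X) i (i + 1) (by omega) (by omega) = theta X i :=
      ComposableArrows.mkOfObjOfMapSucc_map_succ _ _ i hi
    rw [hmap]
    show ComposableArrows.map' C' i (i + 1) (by omega) (by omega) ≫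
        eqToHom ((congrArg C'.obj (minFin ⟨i + 1, by omega⟩)).symm) ≫ happ X C' g hC' (i + 1) =
      (eqToHom ((congrArg C'.obj (minFin ⟨i, by omega⟩)).symm) ≫ happ X C' g hC' i) ≫ theta X i
    rw [Category.assoc, happ_nat X C' g hC' i]
    have hcon := map_congr C' (a := (⟨min i m, by omega⟩ : Fin (m + 1)))
      (b := ⟨min (i + 1) m, by omega⟩) (a' := ⟨i, by omega⟩) (b' := ⟨i + 1, by omega⟩)
      (minFin ⟨i, by omega⟩).symm (minFin ⟨i + 1, by omega⟩).symm
      (homOfLE (by simp only [Fin.mk_le_mk]; omega))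
      (homOfLE (by simp only [Fin.mk_le_mk]; omega))
    show _ = (eqToHom _ ≫ dd' C' i) ≫ happ X C' g hC' (i + 1)
    unfold dd'
    rw [hcon]
    simp [eqToHom_trans_assoc]
  · apply NatTrans.ext
    funext k
    show (eqToHom ((congrArg C'.obj (minFin k)).symm) ≫ happ X C' g hC' k.val) ≫
      (biprod.fst ≫ alpha X k) = g.app k
    have h1 : happ X C' g hC' k.val ≫ biprod.fst = gg' X C' g k.val := biprod.lift_fst _ _
    rw [Category.assoc, ← Category.assoc (happ X C' g hC' k.val), h1]
    have h2 := app_congr g (minFin k)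
    rw [h2]
    rfl

end Approx

section Minimal

lemma minimal (h : Cfun X ⟶ Cfun X) (hh : h ≫ ff X = ff X) : IsIso h := by
  have happfst : ∀ k : Fin (m + 1),
      h.app k ≫ biprod.fst = (biprod.fst : Cob X k.val ⟶ DD X k.val) := by
    intro k
    have h1 : h.app k ≫ biprod.fst ≫ alpha X k = biprod.fst ≫ alpha X k := by
      have := congrArg (fun t : Cfun X ⟶ X => t.app k) hh
      exact this
    haveI : IsIso (alpha X k) := by unfold alpha; infer_instance
    erw [← Category.assoc] at h1
    exact (cancel_mono (alpha X k)).1 h1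
  have hnat : ∀ (k : ℕ) (hk : k + 1 ≤ m),
      theta X k ≫ h.app ⟨k + 1, by omega⟩ = h.app ⟨k, by omega⟩ ≫ theta X k := by
    intro k hk
    have hmap := Cfun_map_succ X k (by omega)
    have hn := h.naturality (homOfLE (show (⟨k, by omega⟩ : Fin (m + 1)) ≤ ⟨k + 1, by omega⟩ by
      simp only [Fin.mk_le_mk]; omega))
    rw [hmap] at hn
    exact hn
  have hdk : ∀ k (hk : k + 1 ≤ m + 1),
      IsIso (biprod.inr ≫ h.app ⟨k, by omega⟩ ≫ biprod.snd : JJ X k ⟶ JJ X k) := by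
    intro k
    induction k with
    | zero =>
      intro _
      haveI : Subsingleton (↑(JJ X 0) : Type v) := inferInstanceAs (Subsingleton PUnit.{v+1})
      have hid : (biprod.inr ≫ h.app ⟨0, by omega⟩ ≫ biprod.snd : JJ X 0 ⟶ JJ X 0) = 𝟙 _ := by
        apply ModuleCat.hom_ext
        apply LinearMap.ext
        intro x
        exact Subsingleton.elim _ _
      rw [hid]; infer_instance
    | succ k ih =>
      intro hk1
      haveI hIH := ih (by omega)
      have hnatk := hnat k (by omega)
      have hnatk' : ∀ {Z : ModuleCat.{v} A} (q : (Cfun X).obj ⟨k + 1, by omega⟩ ⟶ Z),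
          theta X k ≫ h.app ⟨k + 1, by omega⟩ ≫ q = h.app ⟨k, by omega⟩ ≫ theta X k ≫ q :=
        fun q => (Category.assoc _ _ _).symm.trans ((hnatk =≫ q).trans (Category.assoc _ _ _))
      have hinr : (biprod.inr : JJ X k ⟶ Cob X k) ≫ theta X k =
          (biprod.inr : JJ X k ⟶ II X k ⊞ JJ X k) ≫
            (biprod.inr : JJ X (k + 1) ⟶ Cob X (k + 1)) := by
        apply biprod.hom_ext
        · simp [theta]
        · apply biprod.hom_ext <;> simp [theta]
      have hthsf : theta X k ≫ biprod.snd ≫ (biprod.fst : II X k ⊞ JJ X k ⟶ II X k) =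
          biprod.fst ≫ ee X k := by
        simp [theta]
      have hthss : theta X k ≫ biprod.snd ≫ (biprod.snd : II X k ⊞ JJ X k ⟶ JJ X k) =
          biprod.snd := by
        simp [theta]
      apply triangular_isIso
      · -- inr ≫ u ≫ fst = 0
        have key : (biprod.inr ≫ theta X k) ≫ h.app ⟨k + 1, by omega⟩ ≫
            biprod.snd ≫ biprod.fst = 0 := by
          erw [Category.assoc, hnatk', hthsf,
            reassoc_of% (happfst ⟨k, by omega⟩)]
          exact (biprod.inr_fst_assoc (ee X k)).trans Limits.zero_comp
        have tr := hinr =≫ (h.app ⟨k + 1, by omega⟩ ≫ biprod.snd ≫ biprod.fst)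
        exact tr.symm.trans key
      · -- IsIso (inl ≫ u ≫ fst)
        show IsIso (biprod.inl ≫ (biprod.inr ≫ h.app ⟨k + 1, by omega⟩ ≫ biprod.snd) ≫
          biprod.fst)
        have hv : (kernel.ι (dd X k) ≫ biprod.inl) ≫ theta X k =
            ee' X k ≫ biprod.inl ≫ (biprod.inr : JJ X (k + 1) ⟶ Cob X (k + 1)) := by
          apply biprod.hom_ext
          · simp [theta, kernel.condition]
          · apply biprod.hom_ext
            · simp [theta, kerι_ee]
            · simp [theta]
        have hrel : ee' X k ≫ (biprod.inl ≫ (biprod.inr ≫ h.app ⟨k + 1, by omega⟩ ≫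
            biprod.snd) ≫ biprod.fst) = ee' X k := by
          have key : ((kernel.ι (dd X k) ≫ biprod.inl) ≫ theta X k) ≫ h.app ⟨k + 1, by omega⟩ ≫
              biprod.snd ≫ biprod.fst = ee' X k := by
            erw [Category.assoc, Category.assoc, hnatk', hthsf,
              reassoc_of% (happfst ⟨k, by omega⟩)]
            exact ((kernel.ι (dd X k)) ≫= biprod.inl_fst_assoc (ee X k)).trans (kerι_ee X k)
          have tr := hv =≫ (h.app ⟨k + 1, by omega⟩ ≫ biprod.snd ≫ biprod.fst)
          exact tr.symm.trans key
        exact isIso_of_comp_eq_self (ee' X k) (hullE_ess _) _ hrel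
      · -- IsIso (inr ≫ u ≫ snd)
        show IsIso (biprod.inr ≫ (biprod.inr ≫ h.app ⟨k + 1, by omega⟩ ≫ biprod.snd) ≫
          biprod.snd)
        have key : (biprod.inr ≫ theta X k) ≫ h.app ⟨k + 1, by omega⟩ ≫
            biprod.snd ≫ biprod.snd =
            (biprod.inr ≫ h.app ⟨k, by omega⟩ ≫ biprod.snd : JJ X k ⟶ JJ X k) := by
          erw [Category.assoc, hnatk', hthss]
          rfl
        have tr := hinr =≫ (h.app ⟨k + 1, by omega⟩ ≫ biprod.snd ≫ biprod.snd)
        have heq : biprod.inr ≫ (biprod.inr ≫ h.app ⟨k + 1, by omega⟩ ≫ biprod.snd) ≫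
            biprod.snd = (biprod.inr ≫ h.app ⟨k, by omega⟩ ≫ biprod.snd : JJ X k ⟶ JJ X k) :=
          tr.symm.trans key
        rw [heq]
        exact hIH
  have happiso : ∀ k : Fin (m + 1), IsIso (h.app k) := by
    intro k
    apply triangular_isIso (u := (h.app k : Cob X k.val ⟶ Cob X k.val))
    · erw [happfst k]; simp
    · erw [happfst k]
      simp only [biprod.inl_fst]
      infer_instance
    · exact hdk k.val (by omega)
  exact NatIso.isIso_of_isIso_app h

end Minimal

lemma shape (k : Fin (m + 1)) : Nonempty ((Cfun X).obj k ≅ X.obj k ⊞ JJ X k.val) :=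
  ⟨biprod.mapIso (eqToIso (DD_eq X k)) (Iso.refl _)⟩

end Stmt12

/-- Let `A` be an Artin algebra and `n ≥ 2`.  For every object `X` of
`Mor_n(A)` there is an epimorphism `rMon(X) → X` which is a right minimal approximation of
`X` in the monomorphism category `S_n(A)`, and whose source has, in each branch, the
corresponding branch of `X` plus an injective module as a direct summand (the shape of the
construction `rMon`).  In particular `S_n(A)` is contravariantly finite in `Mor_n(A)`. -/
theorem stmt12 (Rb : Type) [CommRing Rb] [IsArtinianRing Rb]
    (A : Type) [Ring A] [Algebra Rb A] [Module.Finite Rb A]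
    (n : ℕ) (hn : 2 ≤ n)
    (X : Fin n ⥤ ModuleCat A) :
    ∃ (C : Fin n ⥤ ModuleCat A) (f : C ⟶ X),
      SnA A n C ∧ Epi f ∧
      -- `f` is a right approximation of `X` in `S_n(A)` :
      (∀ C' : Fin n ⥤ ModuleCat A, SnA A n C' → ∀ g : C' ⟶ X, ∃ h : C' ⟶ C, h ≫ f = g) ∧
      -- `f` is right minimal :
      (∀ h : C ⟶ C, h ≫ f = f → IsIso h) ∧
      -- the shape of `rMon(X)` : each branch is the branch of `X` ⊕ an injective module
      (∀ k : Fin n, ∃ J : ModuleCat A, Injective J ∧ Nonempty (C.obj k ≅ X.obj k ⊞ J)) := by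
  obtain ⟨m, rfl⟩ : ∃ m, n = m + 1 := ⟨n - 1, by omega⟩
  refine ⟨Stmt12.Cfun X, Stmt12.ff X, Stmt12.Cfun_SnA X, Stmt12.ff_epi X, ?_, ?_, ?_⟩
  · intro C' hC' g
    exact Stmt12.approx X C' g hC'
  · intro h hh
    exact Stmt12.minimal X h hh
  · intro k
    exact ⟨Stmt12.JJ X k.val, inferInstance, Stmt12.shape X k⟩
end

section
/- For j ≥ 0, each A-module M, and each X = (X_i, φ_i) ∈ Mor_n(A), there are isomorphisms Ext^j_{T_n(A)}(m_i(M), X) ≅ Ext^j_A(M, X_i) for 1 ≤ i ≤ n, and Ext^j_{T_n(A)}(X, m_n(M)) ≅ Ext^j_A(X_1, M). -/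
open CategoryTheory Limits

universe w₁ w₂

set_option synthInstance.maxHeartbeats 1000000
set_option maxHeartbeats 1000000

namespace Stmt14Aux

section Abstract

variable {C₁ : Type*} [Category C₁] {C₂ : Type*} [Category C₂]

/-- Additive transport of Hom-groups along isomorphisms. -/
@[simps]
def homAddEquivOfIsos {D : Type*} [Category D] [Preadditive D] {A A' B B' : D}
    (e : A ≅ A') (e' : B ≅ B') : (A ⟶ B) ≃+ (A' ⟶ B') where
  toFun f := e.inv ≫ f ≫ e'.hom
  invFun g := e.hom ≫ g ≫ e'.inv
  left_inv f := by simp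
  right_inv g := by simp
  map_add' f g := by simp [Preadditive.add_comp, Preadditive.comp_add]

/-- The additive version of an adjunction's hom-equivalence. -/
def adjHomAddEquiv [Preadditive C₁] [Preadditive C₂] {F : C₁ ⥤ C₂} {G : C₂ ⥤ C₁}
    [G.Additive] (adj : F ⊣ G) (X : C₁) (Y : C₂) :
    (F.obj X ⟶ Y) ≃+ (X ⟶ G.obj Y) :=
  { adj.homEquiv X Y with
    map_add' := fun f g => by
      simp [Adjunction.homEquiv_unit, G.map_add, Preadditive.comp_add] }

/-- The adjunction between functors of homological complexes induced by an adjunction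
of additive functors. -/
noncomputable def adjMapHomologicalComplex [Preadditive C₁] [Preadditive C₂]
    {F : C₁ ⥤ C₂} {G : C₂ ⥤ C₁} [F.Additive] [G.Additive] (adj : F ⊣ G)
    {ι : Type*} (c : ComplexShape ι) :
    F.mapHomologicalComplex c ⊣ G.mapHomologicalComplex c :=
  Adjunction.mkOfHomEquiv
    { homEquiv := fun K L =>
        { toFun := fun η =>
            { f := fun i => adj.homEquiv _ _ (η.f i)
              comm' := fun i j _ => by
                change adj.homEquiv _ _ (η.f i) ≫ G.map (L.d i j) = K.d i j ≫ adj.homEquiv _ _ (η.f j)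
                erw [← Adjunction.homEquiv_naturality_right,
                  ← Adjunction.homEquiv_naturality_left, η.comm i j]
                rfl }
          invFun := fun η =>
            { f := fun i => (adj.homEquiv _ _).symm (η.f i)
              comm' := fun i j _ => by
                change (adj.homEquiv _ _).symm (η.f i) ≫ L.d i j =
                  F.map (K.d i j) ≫ (adj.homEquiv _ _).symm (η.f j)
                erw [← Adjunction.homEquiv_naturality_right_symm,
                  ← Adjunction.homEquiv_naturality_left_symm]
                exact congrArg _ (η.comm i j) }
          left_inv := fun η => by ext i; exact Equiv.symm_apply_apply _ _
          right_inv := fun η => by ext i; exact Equiv.apply_symm_apply _ _ }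
      homEquiv_naturality_left_symm := fun {K' K L} f g => by
        ext i
        exact adj.homEquiv_naturality_left_symm _ _

      homEquiv_naturality_right := fun {K L L'} f g => by
        ext i
        exact adj.homEquiv_naturality_right _ _
 }

open DerivedCategory in
/-- The isomorphism `singleFunctor C 0 ≅ CochainComplex.singleFunctor C 0 ⋙ Q`. -/
noncomputable def singleQIso (C : Type*) [Category C] [Abelian C] [HasDerivedCategory C] :
    DerivedCategory.singleFunctor C 0 ≅ CochainComplex.singleFunctor C 0 ⋙ DerivedCategory.Q :=
  (SingleFunctors.evaluation _ _ (0 : ℤ)).mapIso (DerivedCategory.singleFunctorsPostcompQIso C)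

open DerivedCategory in
/-- Compatibility of `mapDerivedCategory` with single functors. -/
noncomputable def mapDerivedCategorySingleIso {C₁ : Type*} [Category C₁] [Abelian C₁]
    {C₂ : Type*} [Category C₂] [Abelian C₂] [HasDerivedCategory C₁] [HasDerivedCategory C₂]
    (F : C₁ ⥤ C₂) [F.Additive] [PreservesFiniteLimits F] [PreservesFiniteColimits F] (M : C₁) :
    F.mapDerivedCategory.obj ((DerivedCategory.singleFunctor C₁ 0).obj M) ≅
      (DerivedCategory.singleFunctor C₂ 0).obj (F.obj M) :=
  F.mapDerivedCategory.mapIso ((singleQIso C₁).app M) ≪≫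
    (F.mapDerivedCategoryFactors.app ((CochainComplex.singleFunctor C₁ 0).obj M)) ≪≫
    DerivedCategory.Q.mapIso
      ((HomologicalComplex.singleMapHomologicalComplex F (ComplexShape.up ℤ) 0).app M) ≪≫
    ((singleQIso C₂).app (F.obj M)).symm

/-- The key abstract lemma: an adjunction between exact functors between abelian
categories induces isomorphisms on Ext groups. -/
lemma ext_equiv_of_adj {C₁ : Type*} [Category C₁] [Abelian C₁]
    {C₂ : Type*} [Category C₂] [Abelian C₂]
    [HasExt.{w₁} C₁] [HasExt.{w₂} C₂]
    (F : C₁ ⥤ C₂) (G : C₂ ⥤ C₁) (adj : F ⊣ G)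
    [F.Additive] [G.Additive] [PreservesFiniteLimits F] [PreservesFiniteColimits F]
    [PreservesFiniteLimits G] [PreservesFiniteColimits G]
    (M : C₁) (Y : C₂) (j : ℕ) :
    Nonempty (Abelian.Ext (F.obj M) Y j ≃+ Abelian.Ext M (G.obj Y) j) := by
  letI : HasDerivedCategory C₁ := HasDerivedCategory.standard C₁
  letI : HasDerivedCategory C₂ := HasDerivedCategory.standard C₂
  letI : CatCommSq (F.mapHomologicalComplex (ComplexShape.up ℤ)) DerivedCategory.Q
      DerivedCategory.Q F.mapDerivedCategory := ⟨F.mapDerivedCategoryFactors.symm⟩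
  letI : CatCommSq (G.mapHomologicalComplex (ComplexShape.up ℤ)) DerivedCategory.Q
      DerivedCategory.Q G.mapDerivedCategory := ⟨G.mapDerivedCategoryFactors.symm⟩
  have adjD : F.mapDerivedCategory ⊣ G.mapDerivedCategory :=
    (adjMapHomologicalComplex adj (ComplexShape.up ℤ)).localization DerivedCategory.Q
      (HomologicalComplex.quasiIso C₁ (ComplexShape.up ℤ)) DerivedCategory.Q
      (HomologicalComplex.quasiIso C₂ (ComplexShape.up ℤ))
      F.mapDerivedCategory G.mapDerivedCategory
  haveI : (G.mapHomotopyCategory (ComplexShape.up ℤ)).Additive := by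
    haveI : (HomotopyCategory.quotient C₂ (ComplexShape.up ℤ) ⋙
        G.mapHomotopyCategory (ComplexShape.up ℤ)).Additive :=
      Functor.additive_of_iso (G.mapHomotopyCategoryFactors (ComplexShape.up ℤ)).symm
    exact Functor.additive_of_full_essSurj_comp (HomotopyCategory.quotient _ _) _
  haveI : (HomotopyCategory.quasiIso C₂ (ComplexShape.up ℤ)).HasLeftCalculusOfFractions := by
    rw [HomotopyCategory.quasiIso_eq_subcategoryAcyclic_W]
    infer_instance
  haveI : G.mapDerivedCategory.Additive := by
    rw [Localization.functor_additive_iff DerivedCategory.Qh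
      (HomotopyCategory.quasiIso C₂ (ComplexShape.up ℤ))]
    exact Functor.additive_of_iso G.mapDerivedCategoryFactorsh.symm
  let e₁ : (DerivedCategory.singleFunctor C₂ 0).obj (F.obj M) ≅
      F.mapDerivedCategory.obj ((DerivedCategory.singleFunctor C₁ 0).obj M) :=
    (mapDerivedCategorySingleIso F M).symm
  let e₃ : G.mapDerivedCategory.obj ((DerivedCategory.singleFunctor C₂ 0).obj Y) ≅
      (DerivedCategory.singleFunctor C₁ 0).obj (G.obj Y) :=
    mapDerivedCategorySingleIso G Y
  let e₂ : G.mapDerivedCategory.obj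
        (((DerivedCategory.singleFunctor C₂ 0).obj Y)⟦(j : ℤ)⟧) ≅
      ((DerivedCategory.singleFunctor C₁ 0).obj (G.obj Y))⟦(j : ℤ)⟧ :=
    (G.mapDerivedCategory.commShiftIso (j : ℤ)).app _ ≪≫
      (shiftFunctor (DerivedCategory C₁) (j : ℤ)).mapIso e₃
  exact ⟨Abelian.Ext.homAddEquiv.trans
    ((homAddEquivOfIsos e₁ (Iso.refl _)).trans
      ((adjHomAddEquiv adjD _ _).trans
        ((homAddEquivOfIsos (Iso.refl _) e₂).trans Abelian.Ext.homAddEquiv.symm)))⟩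

end Abstract


end Stmt14Aux

/-- The object `m_i(M)` of `Mor_n(A) = (Fin n ⥤ ModuleCat A)`: the paper's branch `j`
(`1 ≤ j ≤ n`) is the object at index `n - j`, so `m_i(M)` has `M` (with identity structure
maps) at the indices `k` with `n - i ≤ k`, and `0` elsewhere. -/
noncomputable def mObj (A : Type) [Ring A] (n : ℕ) (i : ℕ) (M : ModuleCat A) :
    Fin n ⥤ ModuleCat A where
  obj k := if n - i ≤ k.1 then M else ModuleCat.of A PUnit
  map {k l} f :=
    if h : n - i ≤ k.1 then
      eqToHom (by
        have hl : n - i ≤ l.1 := le_trans h (leOfHom f)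
        simp [h, hl])
    else 0
  map_id k := by
    by_cases h : n - i ≤ k.1
    · simp [h]
    · simp only [dif_neg h]
      haveI : Subsingleton
          (ModuleCat.carrier (if n - i ≤ (k : ℕ) then M else ModuleCat.of A PUnit)) := by
        simp only [if_neg h]
        exact inferInstanceAs (Subsingleton PUnit)
      ext x
      exact Subsingleton.elim _ _
  map_comp {k l m} f g := by
    by_cases h : n - i ≤ k.1
    · have hl : n - i ≤ l.1 := le_trans h (leOfHom f)
      have hm : n - i ≤ m.1 := le_trans hl (leOfHom g)
      simp [h, hl, hm]
    · simp [h]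


namespace Stmt14Aux

section Concrete

variable (A : Type) [Ring A] (n i : ℕ)
variable {n i}

lemma mObj_obj_eq (M : ModuleCat A) (k : Fin n) (h : n - i ≤ k.1) :
    (mObj A n i M).obj k = M := by
  simp [mObj, h]

lemma mObj_isZero (M : ModuleCat A) (k : Fin n) (h : ¬ n - i ≤ k.1) :
    IsZero ((mObj A n i M).obj k) := by
  dsimp [mObj]
  rw [if_neg h]
  exact ModuleCat.isZero_of_subsingleton _

lemma mObj_map_eq (M : ModuleCat A) {k l : Fin n} (g : k ⟶ l) (h : n - i ≤ k.1) :
    (mObj A n i M).map g = eqToHom (mObj_obj_eq A M k h) ≫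
      eqToHom (mObj_obj_eq A M l (h.trans (leOfHom g))).symm := by
  simp [mObj, h]
  exact (eqToHom_trans _ _).symm

variable (n i)

/-- The component of the natural transformation `m_i(M) ⟶ m_i(N)` induced by `f : M ⟶ N`. -/
noncomputable def mMapApp {M N : ModuleCat A} (f : M ⟶ N) (k : Fin n) :
    (mObj A n i M).obj k ⟶ (mObj A n i N).obj k :=
  if h : n - i ≤ k.1 then
    eqToHom (mObj_obj_eq A M k h) ≫ f ≫ eqToHom (mObj_obj_eq A N k h).symm
  else 0

lemma mMapApp_pos {M N : ModuleCat A} (f : M ⟶ N) (k : Fin n) (h : n - i ≤ k.1) :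
    mMapApp A n i f k =
      eqToHom (mObj_obj_eq A M k h) ≫ f ≫ eqToHom (mObj_obj_eq A N k h).symm :=
  dif_pos h

/-- The functor `M ↦ m_i(M)`. -/
@[reducible]
noncomputable def mFunctor : ModuleCat A ⥤ (Fin n ⥤ ModuleCat A) where
  obj M := mObj A n i M
  map {M N} f :=
    { app := mMapApp A n i f
      naturality := fun k l g => by
        by_cases h : n - i ≤ k.1
        · have hl : n - i ≤ l.1 := h.trans (leOfHom g)
          rw [mObj_map_eq A M g h, mObj_map_eq A N g h,
            mMapApp_pos A n i f k h, mMapApp_pos A n i f l hl]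
          simp
        · exact (mObj_isZero A M k h).eq_of_src _ _ }
  map_id M := by
    ext k : 2
    by_cases h : n - i ≤ k.1
    · rw [NatTrans.id_app]
      dsimp only
      rw [mMapApp_pos A n i _ k h]
      simp
    · exact (mObj_isZero A M k h).eq_of_src _ _
  map_comp {M N P} f g := by
    ext k : 2
    by_cases h : n - i ≤ k.1
    · rw [NatTrans.comp_app]
      dsimp only
      rw [mMapApp_pos A n i _ k h, mMapApp_pos A n i f k h, mMapApp_pos A n i g k h]
      simp
    · exact (mObj_isZero A M k h).eq_of_src _ _

@[simp] lemma mFunctor_obj (M : ModuleCat A) : (mFunctor A n i).obj M = mObj A n i M := rfl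

lemma mFunctor_map_app {M N : ModuleCat A} (f : M ⟶ N) (k : Fin n) :
    ((mFunctor A n i).map f).app k = mMapApp A n i f k := rfl

instance : (mFunctor A n i).Additive where
  map_add {M N f g} := by
    ext k : 2
    by_cases h : n - i ≤ k.1
    · rw [NatTrans.app_add, mFunctor_map_app, mFunctor_map_app, mFunctor_map_app,
        mMapApp_pos A n i _ k h, mMapApp_pos A n i f k h, mMapApp_pos A n i g k h]
      simp [Preadditive.add_comp, Preadditive.comp_add]
    · exact (mObj_isZero A M k h).eq_of_src _ _

/-- On indices where the module is present, `mFunctor` composed with evaluation is the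
identity. -/
noncomputable def mCompEvalIso (k : Fin n) (h : n - i ≤ k.1) :
    mFunctor A n i ⋙ (evaluation (Fin n) (ModuleCat A)).obj k ≅ 𝟭 (ModuleCat A) :=
  NatIso.ofComponents (fun M => eqToIso (mObj_obj_eq A M k h)) (fun {M N} f => by
    dsimp
    rw [mMapApp_pos A n i f k h]
    simp)

lemma preservesLimitsOfShape_of_isZero {D E : Type*} [Category D] [Category E]
    (F : D ⥤ E) (hF : ∀ X, IsZero (F.obj X)) (J : Type*) [Category J] :
    PreservesLimitsOfShape J F where
  preservesLimit {K} :=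
    ⟨fun {c} _ => ⟨{
      lift := fun s => (hF c.pt).from_ s.pt
      fac := fun s j => (hF _).eq_of_tgt _ _
      uniq := fun s m _ => (hF _).eq_of_tgt _ _ }⟩⟩

lemma preservesColimitsOfShape_of_isZero {D E : Type*} [Category D] [Category E]
    (F : D ⥤ E) (hF : ∀ X, IsZero (F.obj X)) (J : Type*) [Category J] :
    PreservesColimitsOfShape J F where
  preservesColimit {K} :=
    ⟨fun {c} _ => ⟨{
      desc := fun s => (hF c.pt).to_ s.pt
      fac := fun s j => (hF _).eq_of_src _ _
      uniq := fun s m _ => (hF _).eq_of_src _ _ }⟩⟩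

noncomputable instance : PreservesFiniteLimits (mFunctor A n i) := by
  apply preservesFiniteLimits_of_evaluation
  intro k
  by_cases h : n - i ≤ k.1
  · exact preservesFiniteLimits_of_natIso (mCompEvalIso A n i k h).symm
  · constructor
    intro J _ _
    exact preservesLimitsOfShape_of_isZero _ (fun M => mObj_isZero A M k h) J

noncomputable instance : PreservesFiniteColimits (mFunctor A n i) := by
  apply preservesFiniteColimits_of_evaluation
  intro k
  by_cases h : n - i ≤ k.1
  · exact preservesFiniteColimits_of_natIso (mCompEvalIso A n i k h).symm
  · constructor
    intro J _ _
    exact preservesColimitsOfShape_of_isZero _ (fun M => mObj_isZero A M k h) J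

/-- The adjunction `mFunctor ⊣ evaluation at index (n - i)`. -/
noncomputable def mAdj (hi : n - i < n) :
    mFunctor A n i ⊣ (evaluation (Fin n) (ModuleCat A)).obj ⟨n - i, hi⟩ :=
  Adjunction.mkOfHomEquiv
  { homEquiv := fun M X =>
      { toFun := fun η =>
          eqToHom (mObj_obj_eq A M ⟨n - i, hi⟩ le_rfl).symm ≫ η.app ⟨n - i, hi⟩
        invFun := fun f =>
          { app := fun k =>
              if h : n - i ≤ k.1 then
                eqToHom (mObj_obj_eq A M k h) ≫ f ≫
                  X.map (homOfLE (show (⟨n - i, hi⟩ : Fin n) ≤ k from h))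
              else 0
            naturality := fun k l g => by
              by_cases h : n - i ≤ k.1
              · have hl : n - i ≤ l.1 := h.trans (leOfHom g)
                rw [show ((mFunctor A n i).obj M).map g = (mObj A n i M).map g from rfl,
                  mObj_map_eq A M g h]
                dsimp only
                rw [dif_pos h, dif_pos hl]
                have hg : homOfLE (show (⟨n - i, hi⟩ : Fin n) ≤ k from h) ≫ g =
                    homOfLE (show (⟨n - i, hi⟩ : Fin n) ≤ l from hl) :=
                  Subsingleton.elim _ _
                simp [← hg]
              · exact (mObj_isZero A M k h).eq_of_src _ _ }
        left_inv := fun η => by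
          ext k : 2
          by_cases h : n - i ≤ k.1
          · have hnat := η.naturality (homOfLE (show (⟨n - i, hi⟩ : Fin n) ≤ k from h))
            rw [show ((mFunctor A n i).obj M).map
                (homOfLE (show (⟨n - i, hi⟩ : Fin n) ≤ k from h)) =
                (mObj A n i M).map (homOfLE (show (⟨n - i, hi⟩ : Fin n) ≤ k from h)) from rfl,
              mObj_map_eq A M _ le_rfl] at hnat
            dsimp only
            rw [dif_pos h]
            simp only [Category.assoc]
            rw [← hnat]
            simp
          · exact (mObj_isZero A M k h).eq_of_src _ _
        right_inv := fun f => by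
          dsimp only
          rw [dif_pos (le_rfl : n - i ≤ n - i)]
          rw [show homOfLE (show (⟨n - i, hi⟩ : Fin n) ≤ ⟨n - i, hi⟩ from le_rfl) =
            𝟙 (⟨n - i, hi⟩ : Fin n) from Subsingleton.elim _ _]
          simp }
    homEquiv_naturality_left_symm := fun {M' M X} f g => by
      ext k : 2
      rw [NatTrans.comp_app, mFunctor_map_app]
      simp only [Equiv.coe_fn_symm_mk]
      by_cases h : n - i ≤ k.1
      · rw [mMapApp_pos A n i f k h]
        rw [dif_pos h, dif_pos h]
        simp
      · exact (mObj_isZero A M' k h).eq_of_src _ _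
    homEquiv_naturality_right := fun {M X X'} η g => by
      dsimp only
      simp }

set_option maxHeartbeats 4000000 in
/-- The adjunction `evaluation at the top index ⊣ mFunctor A n n`. -/
noncomputable def mAdjTop (hn : 0 < n) :
    (evaluation (Fin n) (ModuleCat A)).obj ⟨n - 1, by omega⟩ ⊣ mFunctor A n n :=
  Adjunction.mkOfHomEquiv
  { homEquiv := fun X M =>
      { toFun := fun f =>
          { app := fun k =>
              X.map (homOfLE (Fin.le_def.mpr (Nat.le_pred_of_lt k.2) :
                  k ≤ (⟨n - 1, by omega⟩ : Fin n))) ≫ f ≫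
                eqToHom (mObj_obj_eq A M k (by omega)).symm
            naturality := fun k l g => by
              have hg : g ≫ homOfLE (Fin.le_def.mpr (Nat.le_pred_of_lt l.2) :
                    l ≤ (⟨n - 1, by omega⟩ : Fin n)) =
                  homOfLE (Fin.le_def.mpr (Nat.le_pred_of_lt k.2)) :=
                Subsingleton.elim _ _
              rw [show ((mFunctor A n n).obj M).map g = (mObj A n n M).map g from rfl,
                mObj_map_eq A M g (by omega)]
              dsimp only
              rw [← Category.assoc, ← X.map_comp, hg]
              simp }
        invFun := fun η =>
          η.app ⟨n - 1, by omega⟩ ≫ eqToHom (mObj_obj_eq A M ⟨n - 1, by omega⟩ (by omega))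
        left_inv := fun f => by
          dsimp only
          rw [show homOfLE (Fin.le_def.mpr (Nat.le_pred_of_lt (⟨n - 1, by omega⟩ : Fin n).2) :
              (⟨n - 1, by omega⟩ : Fin n) ≤ ⟨n - 1, by omega⟩) =
            𝟙 (⟨n - 1, by omega⟩ : Fin n) from Subsingleton.elim _ _]
          simp
        right_inv := fun η => by
          ext k : 2
          have hnat := η.naturality (homOfLE (Fin.le_def.mpr (Nat.le_pred_of_lt k.2) :
            k ≤ (⟨n - 1, by omega⟩ : Fin n)))
          rw [show ((mFunctor A n n).obj M).map (homOfLE (Fin.le_def.mpr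
                (Nat.le_pred_of_lt k.2) : k ≤ (⟨n - 1, by omega⟩ : Fin n))) =
              (mObj A n n M).map (homOfLE (Fin.le_def.mpr (Nat.le_pred_of_lt k.2))) from rfl,
            mObj_map_eq A M _ (by omega)] at hnat
          dsimp only
          simp only [← Category.assoc]
          rw [hnat]
          simp }
    homEquiv_naturality_left_symm := fun {X' X M} f g => by
      dsimp only
      simp
    homEquiv_naturality_right := fun {X M M'} f g => by
      ext k : 2
      rw [NatTrans.comp_app, mFunctor_map_app, mMapApp_pos A n n g k (by omega)]
      dsimp only
      simp }


end Concrete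

end Stmt14Aux

/-- Let `A` be an Artin algebra and `n ≥ 2`, with `Mor_n(A)` identified with
`T_n(A)`-mod.  For every `j ≥ 0`, every `A`-module `M` and every `X ∈ Mor_n(A)` there are
isomorphisms of abelian groups `Ext^j_{T_n(A)}(m_i(M), X) ≅ Ext^j_A(M, X_i)` (`1 ≤ i ≤ n`)
and `Ext^j_{T_n(A)}(X, m_n(M)) ≅ Ext^j_A(X_1, M)`.  (Branch `i` of `X` is `X.obj ⟨n - i, _⟩`.) -/
theorem stmt14 (R : Type) [CommRing R] [IsArtinianRing R]
    (A : Type) [Ring A] [Algebra R A] [Module.Finite R A]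
    (n : ℕ) (hn : 2 ≤ n)
    [HasExt.{w₁} (Fin n ⥤ ModuleCat A)] [HasExt.{w₂} (ModuleCat A)]
    (M : ModuleCat A) (X : Fin n ⥤ ModuleCat A) :
    ∀ j : ℕ,
      (∀ i : ℕ, (hi1 : 1 ≤ i) → (hi2 : i ≤ n) →
        Nonempty (Abelian.Ext (mObj A n i M) X j ≃+
          Abelian.Ext M (X.obj ⟨n - i, by omega⟩) j)) ∧
      Nonempty (Abelian.Ext X (mObj A n n M) j ≃+
        Abelian.Ext (X.obj ⟨n - 1, by omega⟩) M j) := by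
  intro j
  constructor
  · intro i hi1 hi2
    exact Stmt14Aux.ext_equiv_of_adj (Stmt14Aux.mFunctor A n i)
      ((evaluation (Fin n) (ModuleCat A)).obj ⟨n - i, by omega⟩)
      (Stmt14Aux.mAdj A n i (by omega)) M X j
  · obtain ⟨e⟩ := Stmt14Aux.ext_equiv_of_adj
      ((evaluation (Fin n) (ModuleCat A)).obj ⟨n - 1, by omega⟩)
      (Stmt14Aux.mFunctor A n n) (Stmt14Aux.mAdjTop A n (by omega)) X M j
    exact ⟨e.symm⟩
end
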